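/- Let n ≥ 2 and let S ⊆ [n] be a set with |S| = ⌈n/2⌉ or |S| = ⌊n/2⌋. Put F = {S} and G = {T ⊆ [n] : T ⊄ S is not a subset of S and S is not a subset of T} (i.e., all subsets of [n] that neither contain S nor are contained in S). Then F and G are nonempty, the pair (F,G) is cross-Sperner, and |F| + |G| = 2^n − 2^⌈n/2⌉ − 2^⌊n/2⌋ + 2. -/

import Mathlib

/-- A pair of families `(𝓕, 𝓖)` is cross-Sperner if there is no pair
`F ∈ 𝓕`, `G ∈ 𝓖` with `F ⊆ G` or `G ⊆ F`. -/
def CrossSperner (𝓕 𝓖 : Finset (Finset ℕ)) : Prop :=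
  ∀ F ∈ 𝓕, ∀ G ∈ 𝓖, ¬ F ⊆ G ∧ ¬ G ⊆ F

lemma cross_count_aux (A S : Finset ℕ) (hS : S ⊆ A) :
    (A.powerset.filter (fun T => ¬ T ⊆ S ∧ ¬ S ⊆ T)).card + 2 ^ S.card + 2 ^ (A \ S).card
      = 2 ^ A.card + 1 := by
  have h1 : A.powerset.filter (fun T => T ⊆ S) = S.powerset := by
    ext T
    simp only [Finset.mem_filter, Finset.mem_powerset]
    exact ⟨fun h => h.2, fun h => ⟨h.trans hS, h⟩⟩
  have h2 : (A.powerset.filter (fun T => S ⊆ T)).card = (A \ S).powerset.card := by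
    apply Finset.card_bij' (fun T _ => T \ S) (fun U _ => S ∪ U)
    · intro T hT
      simp only [Finset.mem_filter, Finset.mem_powerset] at hT ⊢
      exact Finset.sdiff_subset_sdiff hT.1 le_rfl
    · intro U hU
      simp only [Finset.mem_filter, Finset.mem_powerset] at hU ⊢
      exact ⟨Finset.union_subset hS (hU.trans (Finset.sdiff_subset)), Finset.subset_union_left⟩
    · intro T hT
      simp only [Finset.mem_filter, Finset.mem_powerset] at hT
      rw [Finset.union_sdiff_of_subset hT.2]
    · intro U hU
      simp only [Finset.mem_powerset] at hU
      rw [Finset.union_sdiff_cancel_left]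
      exact Finset.disjoint_sdiff.mono_right hU |>.symm |> fun h => h.symm
  have h3 : A.powerset.filter (fun T => T ⊆ S) ∩ A.powerset.filter (fun T => S ⊆ T)
      = {S} := by
    ext T
    simp only [Finset.mem_inter, Finset.mem_filter, Finset.mem_powerset, Finset.mem_singleton]
    constructor
    · rintro ⟨⟨-, h1⟩, -, h2⟩
      exact subset_antisymm h1 h2
    · rintro rfl
      exact ⟨⟨hS, le_rfl⟩, hS, le_rfl⟩
  have h4 : A.powerset.filter (fun T => T ⊆ S ∨ S ⊆ T)
      = A.powerset.filter (fun T => T ⊆ S) ∪ A.powerset.filter (fun T => S ⊆ T) :=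
    Finset.filter_or _ _ _
  have h5 := Finset.card_union_add_card_inter (A.powerset.filter (fun T => T ⊆ S))
    (A.powerset.filter (fun T => S ⊆ T))
  rw [h3, ← h4, Finset.card_singleton, h1] at h5
  have h6 : A.powerset.filter (fun T => ¬ T ⊆ S ∧ ¬ S ⊆ T)
      = A.powerset.filter (fun T => ¬ (T ⊆ S ∨ S ⊆ T)) := by
    simp [not_or]
  have h7 := Finset.card_filter_add_card_filter_not
    (s := A.powerset) (p := fun T => T ⊆ S ∨ S ⊆ T)
  rw [← h6] at h7
  rw [Finset.card_powerset] at h5 h7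
  rw [Finset.card_powerset] at h2
  omega

theorem cross_sperner_extremal_construction (n : ℕ) (hn : 2 ≤ n)
    (S : Finset ℕ) (hS : S ⊆ Finset.Icc 1 n)
    (hScard : S.card = (n + 1) / 2 ∨ S.card = n / 2)
    (𝓕 𝓖 : Finset (Finset ℕ))
    (h𝓕 : 𝓕 = {S})
    (h𝓖 : 𝓖 = (Finset.Icc 1 n).powerset.filter (fun T => ¬ T ⊆ S ∧ ¬ S ⊆ T)) :
    𝓕.Nonempty ∧ 𝓖.Nonempty ∧ CrossSperner 𝓕 𝓖 ∧
      𝓕.card + 𝓖.card = 2 ^ n - 2 ^ ((n + 1) / 2) - 2 ^ (n / 2) + 2 := by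
  set A := Finset.Icc 1 n with hA
  have hAcard : A.card = n := by simp [hA]
  have hsd : (A \ S).card = n - S.card := by
    rw [Finset.card_sdiff_of_subset hS, hAcard]
  have hSle : S.card ≤ n := hAcard ▸ Finset.card_le_card hS
  -- nonemptiness facts
  have hSne : S.Nonempty := by
    rw [← Finset.card_pos]
    omega
  have hCne : (A \ S).Nonempty := by
    rw [← Finset.card_pos]
    omega
  have hGmem : A \ S ∈ 𝓖 := by
    rw [h𝓖, Finset.mem_filter, Finset.mem_powerset]
    refine ⟨Finset.sdiff_subset, ?_, ?_⟩
    · intro h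
      obtain ⟨x, hx⟩ := hCne
      have := h hx
      simp at hx
      exact hx.2 this
    · intro h
      obtain ⟨x, hx⟩ := hSne
      have := h hx
      simp at this
      exact this.2 hx
  refine ⟨by simp [h𝓕], ⟨_, hGmem⟩, ?_, ?_⟩
  · intro F hF G hG
    rw [h𝓕, Finset.mem_singleton] at hF
    rw [h𝓖, Finset.mem_filter] at hG
    subst hF
    exact ⟨hG.2.2, hG.2.1⟩
  · have hcount := cross_count_aux A S hS
    rw [hAcard, hsd] at hcount
    have hb1 : 2 ^ ((n + 1) / 2) ≤ 2 ^ (n - 1) := Nat.pow_le_pow_right (by norm_num) (by omega)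
    have hb2 : 2 ^ (n / 2) ≤ 2 ^ (n - 1) := Nat.pow_le_pow_right (by norm_num) (by omega)
    have hb3 : 2 ^ (n - 1) + 2 ^ (n - 1) = 2 ^ n := by
      rw [← two_mul, ← pow_succ']
      congr 1
      omega
    have hF1 : 𝓕.card = 1 := by rw [h𝓕]; exact Finset.card_singleton _
    rw [h𝓕, h𝓖] at *
    rcases hScard with h | h
    · rw [h, show n - (n + 1) / 2 = n / 2 by omega] at hcount
      omega
    · rw [h, show n - n / 2 = (n + 1) / 2 by omega] at hcount
      omega
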